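/- Let A be the diagonal n×n matrix with strictly decreasing positive diagonal entries, and let J be the nilpotent upper-triangular Jordan block (J e_i = e_{i-1}, J e_1 = 0). Then the unital algebra generated by A and J equals the algebra of all upper triangular n×n matrices; in particular its dimension is n(n+1)/2. -/

import Mathlib

open Matrix Polynomial

variable {n : ℕ}

/-- upper triangular matrices as subalgebra -/
def upperT (n : ℕ) : Subalgebra ℝ (Matrix (Fin n) (Fin n) ℝ) where
  carrier := {M : Matrix (Fin n) (Fin n) ℝ | ∀ i j, j < i → M i j = 0}
  add_mem' := by
    intro M N hM hN i j hij
    simp [hM i j hij, hN i j hij]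
  mul_mem' := by
    intro M N hM hN i j hij
    show ∑ k, M i k * N k j = 0
    refine Finset.sum_eq_zero fun k _ => ?_
    rcases lt_or_ge k i with h | h
    · rw [hM i k h, zero_mul]
    · rw [hN k j (lt_of_lt_of_le hij h), mul_zero]
  algebraMap_mem' := by
    intro r i j hij
    simp [Matrix.algebraMap_matrix_apply, (ne_of_lt hij).symm]

lemma J_pow_apply (J : Matrix (Fin n) (Fin n) ℝ)
    (hJ : ∀ i j, J i j = if (i : ℕ) + 1 = (j : ℕ) then 1 else 0) (k : ℕ) :
    ∀ i j : Fin n, (J ^ k) i j = if (i : ℕ) + k = (j : ℕ) then 1 else 0 := by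
  induction k with
  | zero =>
    intro i j
    simp [Matrix.one_apply, Fin.ext_iff]
  | succ k ih =>
    intro i j
    rw [pow_succ, Matrix.mul_apply]
    by_cases h : (i : ℕ) + (k + 1) = (j : ℕ)
    · have hk : (i : ℕ) + k < n := by omega
      rw [if_pos h, Finset.sum_eq_single (⟨(i : ℕ) + k, hk⟩ : Fin n)]
      · rw [ih, hJ]; simp; omega
      · intro b _ hb
        rw [ih]
        have : (i : ℕ) + k ≠ (b : ℕ) := by
          intro hc; apply hb; exact Fin.ext hc.symm
        rw [if_neg this, zero_mul]
      · intro hb; exact absurd (Finset.mem_univ _) hb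
    · rw [if_neg h]
      refine Finset.sum_eq_zero fun b _ => ?_
      rw [ih, hJ]
      by_cases hb : (i : ℕ) + k = (b : ℕ)
      · have : (b : ℕ) + 1 ≠ (j : ℕ) := by omega
        rw [if_neg this, mul_zero]
      · rw [if_neg hb, zero_mul]

lemma stdBasis_mul_apply (i : Fin n) (B : Matrix (Fin n) (Fin n) ℝ) (r c : Fin n) :
    (single i i (1 : ℝ) * B) r c = if i = r then B i c else 0 := by
  rw [Matrix.mul_apply]
  by_cases h : i = r
  · subst h
    rw [if_pos rfl, Finset.sum_eq_single i]
    · rw [Matrix.single_apply_same, one_mul]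
    · intro b _ hb
      rw [Matrix.single_apply_of_ne _ _ _ _ _ (by tauto), zero_mul]
    · intro hb; exact absurd (Finset.mem_univ _) hb
  · rw [if_neg h]
    refine Finset.sum_eq_zero fun b _ => ?_
    rw [Matrix.single_apply_of_ne _ _ _ _ _ (by tauto), zero_mul]

lemma diag_basis_mem (a : Fin n → ℝ) (hdec : StrictAnti a)
    (S : Set (Matrix (Fin n) (Fin n) ℝ)) (hS : Matrix.diagonal a ∈ S) (i : Fin n) :
    single i i 1 ∈ Algebra.adjoin ℝ S := by
  have hinj : Set.InjOn a (Finset.univ : Finset (Fin n)) :=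
    fun x _ y _ h => hdec.injective h
  set p := Lagrange.basis Finset.univ a i with hp
  have key : (aeval (Matrix.diagonal a) p) = single i i 1 := by
    have h1 : Matrix.diagonal a = Matrix.diagonalAlgHom ℝ a := rfl
    rw [h1, aeval_algHom_apply]
    have h2 : (aeval a p) = fun j => if i = j then (1 : ℝ) else 0 := by
      funext j
      have h3 : (aeval a p) j = aeval (a j) p :=
        (aeval_algHom_apply (Pi.evalAlgHom ℝ (fun _ => ℝ) j) a p).symm
      rw [h3]
      simp only [coe_aeval_eq_eval]
      by_cases h : i = j
      · subst h
        rw [if_pos rfl, Lagrange.eval_basis_self hinj (Finset.mem_univ i)]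
      · rw [if_neg h, Lagrange.eval_basis_of_ne h (Finset.mem_univ j)]
    rw [h2]
    ext r c
    rw [Matrix.diagonalAlgHom_apply, Matrix.diagonal_apply]
    by_cases h1' : i = r
    · subst h1'
      by_cases h2' : i = c
      · subst h2'
        rw [if_pos rfl, if_pos rfl, Matrix.single_apply_same]
      · rw [if_neg h2', Matrix.single_apply_of_ne _ _ _ _ _ (by tauto)]
    · rw [Matrix.single_apply_of_ne _ _ _ _ _ (by tauto)]
      by_cases h2' : r = c
      · rw [if_pos h2', if_neg h1']
      · rw [if_neg h2']
  rw [← key]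
  exact Algebra.adjoin_mono (Set.singleton_subset_iff.mpr hS)
    (aeval_mem_adjoin_singleton ℝ _)

theorem stmt_8 (n : ℕ) (a : Fin n → ℝ) (hpos : ∀ i, 0 < a i) (hdec : StrictAnti a)
    (J : Matrix (Fin n) (Fin n) ℝ)
    (hJ : ∀ i j, J i j = if (i : ℕ) + 1 = (j : ℕ) then 1 else 0) :
    ((Algebra.adjoin ℝ {Matrix.diagonal a, J} :
        Subalgebra ℝ (Matrix (Fin n) (Fin n) ℝ)) : Set (Matrix (Fin n) (Fin n) ℝ)) =
      {M : Matrix (Fin n) (Fin n) ℝ | ∀ i j, j < i → M i j = 0} ∧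
    Module.finrank ℝ
      (Algebra.adjoin ℝ {Matrix.diagonal a, J} :
        Subalgebra ℝ (Matrix (Fin n) (Fin n) ℝ)) = n * (n + 1) / 2 := by
  set S : Set (Matrix (Fin n) (Fin n) ℝ) := {Matrix.diagonal a, J} with hSdef
  -- membership of std basis matrices for i ≤ j
  have hE : ∀ i j : Fin n, i ≤ j → single i j 1 ∈ Algebra.adjoin ℝ S := by
    intro i j hij
    have hEii := diag_basis_mem a hdec S (Set.mem_insert _ _) i
    have hJmem : J ∈ Algebra.adjoin ℝ S :=
      Algebra.subset_adjoin (Set.mem_insert_of_mem _ rfl)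
    have key : single i i 1 * J ^ ((j : ℕ) - (i : ℕ)) = single i j 1 := by
      ext r c
      rw [stdBasis_mul_apply, ]
      by_cases h : i = r
      · subst h
        rw [if_pos rfl, J_pow_apply J hJ]
        have : (i : ℕ) + ((j : ℕ) - (i : ℕ)) = (j : ℕ) := by
          have := (Fin.le_def.mp hij); omega
        by_cases hc : (j : ℕ) = (c : ℕ)
        · have : j = c := Fin.ext hc
          subst this
          rw [if_pos (by omega), Matrix.single_apply_same]
        · rw [if_neg (by omega),
            Matrix.single_apply_of_ne _ _ _ _ _
              (by rintro ⟨-, rfl⟩; exact hc rfl)]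
      · rw [if_neg h,
          Matrix.single_apply_of_ne _ _ _ _ _ (by rintro ⟨rfl, -⟩; exact h rfl)]
    rw [← key]
    exact mul_mem hEii (pow_mem hJmem _)
  -- the adjoin equals upperT
  have hle : Algebra.adjoin ℝ S ≤ upperT n := by
    rw [Algebra.adjoin_le_iff]
    rintro M (rfl | rfl)
    · intro i j hij
      exact Matrix.diagonal_apply_ne a (ne_of_gt hij)
    · intro i j hij
      rw [hJ]
      exact if_neg (by have := (Fin.lt_def.mp hij); omega)
  have hge : upperT n ≤ Algebra.adjoin ℝ S := by
    intro M hM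
    have hM' : ∀ i j : Fin n, j < i → M i j = 0 := hM
    rw [matrix_eq_sum_single M]
    refine Subalgebra.sum_mem _ fun i _ => Subalgebra.sum_mem _ fun j _ => ?_
    rcases le_or_gt i j with h | h
    · have hrw : single i j (M i j) = (M i j) • single i j (1 : ℝ) := by
        rw [smul_single, smul_eq_mul, mul_one]
      rw [hrw]
      exact Subalgebra.smul_mem _ (hE i j h) _
    · rw [hM' i j h, single_zero]
      exact Subalgebra.zero_mem _
  have heq : Algebra.adjoin ℝ S = upperT n := le_antisymm hle hge
  constructor
  · rw [heq]; rfl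
  · rw [heq]
    -- linear equivalence with functions on pairs i ≤ j
    let σ := {p : Fin n × Fin n // p.1 ≤ p.2}
    let f : upperT n →ₗ[ℝ] (σ → ℝ) :=
      { toFun := fun M p => (M : Matrix (Fin n) (Fin n) ℝ) p.1.1 p.1.2
        map_add' := fun M N => rfl
        map_smul' := fun c M => rfl }
    have hbij : Function.Bijective f := by
      constructor
      · intro M N h
        ext i j
        rcases le_or_gt i j with hij | hij
        · exact congrFun h ⟨(i, j), hij⟩
        · show (M : Matrix (Fin n) (Fin n) ℝ) i j = (N : Matrix (Fin n) (Fin n) ℝ) i j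
          rw [M.2 i j hij, N.2 i j hij]
      · intro g
        refine ⟨⟨fun i j => if h : i ≤ j then g ⟨(i, j), h⟩ else 0, ?_⟩, ?_⟩
        · intro i j hij
          exact dif_neg (not_le.mpr hij)
        · funext p
          exact dif_pos p.2
    have := (LinearEquiv.ofBijective f hbij).finrank_eq
    rw [this, Module.finrank_pi]
    have : Fintype.card σ = Fintype.card (Sym2 (Fin n)) :=
      (Fintype.card_congr Sym2.sortEquiv).symm
    rw [this, Sym2.card, Fintype.card_fin, Nat.choose_two_right]
    simp [Nat.mul_comm]
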